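/- (Family I) In the dual bracket of the Galilei bialgebra ansatz, take α ∈ ℝ³ arbitrary, β ∈ ℝ with β ≠ 0, and set all other parameters to zero: γ = φ = λ = ξ = n = 0, v = θ = ρ = 0, σ = χ = ω = 0. Then the resulting bracket satisfies the Jacobi identity, and hence defines a Lie algebra structure on the 10-dimensional space spanned by H̃, P̃_i, K̃_i, J̃_i. -/

import Mathlib

/-- The Levi-Civita symbol on `{1,2,3}` (indexed by `Fin 3`). -/
def eps (i j k : Fin 3) : ℝ :=
  if (i, j, k) = (0, 1, 2) ∨ (i, j, k) = (1, 2, 0) ∨ (i, j, k) = (2, 0, 1) then 1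
  else if (i, j, k) = (2, 1, 0) ∨ (i, j, k) = (1, 0, 2) ∨ (i, j, k) = (0, 2, 1) then -1
  else 0

/-- The Kronecker delta on `Fin 3`. -/
def kron (i j : Fin 3) : ℝ := if i = j then 1 else 0

/-- The 10-dimensional real vector space with basis `H̃, P̃_i, K̃_i, J̃_i`, an element
being recorded by its coefficients `(h, p, k, j)` in this basis. -/
abbrev DualV : Type := ℝ × (Fin 3 → ℝ) × (Fin 3 → ℝ) × (Fin 3 → ℝ)

/-- The dual bracket of the Galilei bialgebra ansatz: the antisymmetric bilinear
bracket on the span of `H̃, P̃_i, K̃_i, J̃_i` determined by the structure constants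
(with parameters `α, γ, φ, λ, ξ, n ∈ ℝ³`, `β, v, θ, ρ ∈ ℝ`, `σ, χ, ω ∈ M₃(ℝ)`):
`[H̃, J̃_k] = ε_{ikl} α_l J̃_i`;
`[H̃, P̃_k] = γ_k H̃ + (β δ_{ik} + ε_{ikl} α_l) P̃_i + ε_{ikl} φ_l J̃_i`;
`[H̃, K̃_k] = (β δ_{ik} + ε_{ikl} α_l) K̃_i + ε_{ikl} γ_l J̃_i`;
`[K̃_k, J̃_l] = 2(n_k δ_{li} − n_i δ_{kl}) K̃_i + 2(ε_{ikn} ω_{ln} + ε_{iln} ω_{nk}) J̃_i`;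
`[P̃_l, P̃_m] = (χ_{lm} − χ_{ml}) H̃ + 2 ε_{klm}(ρ δ_{ki} + (1/2)(σ_{ik} − σ_{nn} δ_{ik})) P̃_i`
`  + 2(v ε_{ilm} + (1/2)(φ_l δ_{im} − φ_m δ_{il})) K̃_i + 2(λ_l δ_{im} − λ_m δ_{il}) J̃_i`;
`[P̃_k, K̃_l] = (2 ξ_n ε_{nkl} − θ δ_{kl}) H̃ + (2 ε_{nki} ω_{nl} − ω_{nn} ε_{lki}) P̃_i`
`  + (ρ ε_{kli} − ε_{lin} σ_{kn} − δ_{ki} γ_l) K̃_i + (ε_{ikn} χ_{nl} + ε_{iln} χ_{kn}) J̃_i`;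
`[P̃_k, J̃_l] = (2 ω_{lk} − ω_{nn} δ_{lk}) H̃ + 2(n_k δ_{li} − n_i δ_{kl}) P̃_i`
`  − (β ε_{kli} + α_l δ_{ki}) K̃_i + (ε_{ikn} σ_{nl} + ε_{iln} σ_{kn}) J̃_i`;
`[K̃_m, K̃_n] = 2 ε_{kmn} ω_{ki} K̃_i + 2(ξ_m δ_{ni} − ξ_n δ_{mi}) J̃_i`;
`[J̃_k, J̃_l] = 2(n_k δ_{li} − n_l δ_{ki}) J̃_i`. -/
noncomputable def dualBracket (α γv φv lam ξ nv : Fin 3 → ℝ) (β v θ ρ : ℝ)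
    (σ χ ω : Fin 3 → Fin 3 → ℝ) (X Y : DualV) : DualV :=
  -- coefficients of `X` and `Y` on `H̃, P̃, K̃, J̃`
  let h : ℝ := X.1; let p := X.2.1; let κ := X.2.2.1; let j := X.2.2.2
  let h' : ℝ := Y.1; let p' := Y.2.1; let κ' := Y.2.2.1; let j' := Y.2.2.2
  ( -- H̃ component
    (∑ k, (h * p' k - h' * p k) * γv k)
    + (∑ l, ∑ m, p l * p' m * (χ l m - χ m l))
    + (∑ k, ∑ l, (p k * κ' l - p' k * κ l) * (2 * (∑ n, ξ n * eps n k l) - θ * kron k l))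
    + (∑ k, ∑ l, (p k * j' l - p' k * j l) * (2 * ω l k - (∑ n, ω n n) * kron l k)),
    -- P̃ component
    fun i =>
      (∑ k, (h * p' k - h' * p k) * (β * kron i k + ∑ l, eps i k l * α l))
      + (∑ l, ∑ m, p l * p' m *
          (2 * ∑ k, eps k l m * (ρ * kron k i + (1/2) * (σ i k - (∑ n, σ n n) * kron i k))))
      + (∑ k, ∑ l, (p k * κ' l - p' k * κ l) *
          (2 * (∑ n, eps n k i * ω n l) - (∑ n, ω n n) * eps l k i))
      + (∑ k, ∑ l, (p k * j' l - p' k * j l) * (2 * (nv k * kron l i - nv i * kron k l))),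
    -- K̃ component
    fun i =>
      (∑ k, (h * κ' k - h' * κ k) * (β * kron i k + ∑ l, eps i k l * α l))
      + (∑ k, ∑ l, (κ k * j' l - κ' k * j l) * (2 * (nv k * kron l i - nv i * kron k l)))
      + (∑ l, ∑ m, p l * p' m *
          (2 * (v * eps i l m + (1/2) * (φv l * kron i m - φv m * kron i l))))
      + (∑ k, ∑ l, (p k * κ' l - p' k * κ l) *
          (ρ * eps k l i - (∑ n, eps l i n * σ k n) - kron k i * γv l))
      + (∑ k, ∑ l, (p k * j' l - p' k * j l) * (-(β * eps k l i + α l * kron k i)))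
      + (∑ m, ∑ n, κ m * κ' n * (2 * ∑ k, eps k m n * ω k i)),
    -- J̃ component
    fun i =>
      (∑ k, (h * j' k - h' * j k) * (∑ l, eps i k l * α l))
      + (∑ k, (h * p' k - h' * p k) * (∑ l, eps i k l * φv l))
      + (∑ k, (h * κ' k - h' * κ k) * (∑ l, eps i k l * γv l))
      + (∑ k, ∑ l, (κ k * j' l - κ' k * j l) *
          (2 * ∑ n, (eps i k n * ω l n + eps i l n * ω n k)))
      + (∑ l, ∑ m, p l * p' m * (2 * (lam l * kron i m - lam m * kron i l)))
      + (∑ k, ∑ l, (p k * κ' l - p' k * κ l) * (∑ n, (eps i k n * χ n l + eps i l n * χ k n)))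
      + (∑ k, ∑ l, (p k * j' l - p' k * j l) * (∑ n, (eps i k n * σ n l + eps i l n * σ k n)))
      + (∑ m, ∑ n, κ m * κ' n * (2 * (ξ m * kron n i - ξ n * kron m i)))
      + (∑ k, ∑ l, j k * j' l * (2 * (nv k * kron l i - nv l * kron k i))) )

/-- A bracket operation on `DualV` satisfies the Jacobi identity. -/
def JacobiHolds (br : DualV → DualV → DualV) : Prop :=
  ∀ X Y Z : DualV, br X (br Y Z) + br Z (br X Y) + br Y (br Z X) = 0


lemma eps_eval : ∀ i j k : Fin 3, eps i j k =
    ![![![0,0,0],![0,0,1],![0,-1,0]],![![0,0,-1],![0,0,0],![1,0,0]],![![0,1,0],![-1,0,0],![0,0,0]]] i j k := by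
  intro i j k; fin_cases i <;> fin_cases j <;> fin_cases k <;> rfl

lemma kron_eval : ∀ i j : Fin 3, kron i j = ![![1,0,0],![0,1,0],![0,0,1]] i j := by
  intro i j; fin_cases i <;> fin_cases j <;> rfl

/-- Explicit form of the Family I bracket. -/
noncomputable def brI (α : Fin 3 → ℝ) (β : ℝ) (X Y : DualV) : DualV :=
  let h : ℝ := X.1; let p := X.2.1; let κ := X.2.2.1; let j := X.2.2.2
  let h' : ℝ := Y.1; let p' := Y.2.1; let κ' := Y.2.2.1; let j' := Y.2.2.2
  let e : Fin 3 → ℝ := fun k => h * p' k - h' * p k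
  let f : Fin 3 → ℝ := fun k => h * κ' k - h' * κ k
  let m : Fin 3 → ℝ := fun k => h * j' k - h' * j k
  (0,
   ![β * e 0 + (e 1 * α 2 - e 2 * α 1),
     β * e 1 + (e 2 * α 0 - e 0 * α 2),
     β * e 2 + (e 0 * α 1 - e 1 * α 0)],
   ![β * f 0 + (f 1 * α 2 - f 2 * α 1)
       - β * (p 1 * j' 2 - p 2 * j' 1) + β * (p' 1 * j 2 - p' 2 * j 1)
       - p 0 * (j' 0 * α 0 + j' 1 * α 1 + j' 2 * α 2)
       + p' 0 * (j 0 * α 0 + j 1 * α 1 + j 2 * α 2),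
     β * f 1 + (f 2 * α 0 - f 0 * α 2)
       - β * (p 2 * j' 0 - p 0 * j' 2) + β * (p' 2 * j 0 - p' 0 * j 2)
       - p 1 * (j' 0 * α 0 + j' 1 * α 1 + j' 2 * α 2)
       + p' 1 * (j 0 * α 0 + j 1 * α 1 + j 2 * α 2),
     β * f 2 + (f 0 * α 1 - f 1 * α 0)
       - β * (p 0 * j' 1 - p 1 * j' 0) + β * (p' 0 * j 1 - p' 1 * j 0)
       - p 2 * (j' 0 * α 0 + j' 1 * α 1 + j' 2 * α 2)
       + p' 2 * (j 0 * α 0 + j 1 * α 1 + j 2 * α 2)],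
   ![m 1 * α 2 - m 2 * α 1, m 2 * α 0 - m 0 * α 2, m 0 * α 1 - m 1 * α 0])

set_option maxHeartbeats 1000000 in
lemma dualBracket_eq_brI (α : Fin 3 → ℝ) (β : ℝ) :
    dualBracket α 0 0 0 0 0 β 0 0 0 0 0 0 = brI α β := by
  funext X Y
  obtain ⟨xh, xp, xk, xj⟩ := X
  obtain ⟨yh, yp, yk, yj⟩ := Y
  refine Prod.ext ?_ (Prod.ext ?_ (Prod.ext ?_ ?_)) <;>
    simp only [dualBracket, brI, Fin.sum_univ_three, Pi.zero_apply, eps_eval, kron_eval] <;>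
    (try funext i) <;> (try fin_cases i) <;> norm_num [Matrix.cons_val_two, Matrix.vecHead, Matrix.vecTail] <;> (try ring)

set_option maxHeartbeats 1000000 in
lemma brI_jacobi (α : Fin 3 → ℝ) (β : ℝ) : JacobiHolds (brI α β) := by
  intro X Y Z
  obtain ⟨xh, xp, xk, xj⟩ := X
  obtain ⟨yh, yp, yk, yj⟩ := Y
  obtain ⟨zh, zp, zk, zj⟩ := Z
  refine Prod.ext ?_ (Prod.ext ?_ (Prod.ext ?_ ?_)) <;>
    simp only [brI, Prod.fst_add, Prod.snd_add, Prod.fst_zero, Prod.snd_zero] <;>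
    (try funext i) <;> (try fin_cases i) <;> norm_num [Pi.add_apply, Matrix.cons_val_two, Matrix.vecHead, Matrix.vecTail] <;> (try ring)

/-- (Family I) For arbitrary `α ∈ ℝ³` and `β ≠ 0`, with all other parameters zero,
the dual bracket of the Galilei bialgebra ansatz satisfies the Jacobi identity, and
hence defines a Lie algebra structure on the span of `H̃, P̃_i, K̃_i, J̃_i`. -/
theorem familyI_jacobi (α : Fin 3 → ℝ) (β : ℝ) (hβ : β ≠ 0) :
    JacobiHolds (dualBracket α 0 0 0 0 0 β 0 0 0 0 0 0) := by
  rw [dualBracket_eq_brI]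
  exact brI_jacobi α β
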